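/- Trace inequality for rotated-Q1 IFE functions, uniform in the interface location (reference-element form, h = 1): there exists a constant C > 0 depending only on β⁻ and β⁺ such that for all d, e ∈ (0,1) and all coefficient vectors (c⁻, c⁺) satisfying the jump conditions (J1)–(J3), the associated piecewise rotated-Q1 function φ satisfies, for each of the four edges γ of T, ∫_γ (β ∂φ/∂ν)² ds ≤ C (β⁻ ∫_{T⁻} |∇p⁻|² dx dy + β⁺ ∫_{T⁺} |∇p⁺|² dx dy), where ν is the outward unit normal to T along γ, β equals β⁻ on T⁻ and β⁺ on T⁺, and on the two edges cut by the interface the integrand is taken piecewise (e.g. for the bottom edge: ∫₀^d (β⁻ ∂_y p⁻(x,0))² dx + ∫_d¹ (β⁺ ∂_y p⁺(x,0))² dx, and analogously with the cut point e on the top edge; on the uncut right and left edges the integrand is (β⁺ ∂_x p⁺(1,y))² and (β⁻ ∂_x p⁻(0,y))² respectively). -/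

import Mathlib

open MeasureTheory Set

noncomputable section

/-- The rotated-Q1 polynomial `c₁ + c₂ x + c₃ y + c₄ (x² − y²)` with coefficient
vector `c = (c 0, c 1, c 2, c 3)`. -/
def rq1 (c : Fin 4 → ℝ) (x y : ℝ) : ℝ :=
  c 0 + c 1 * x + c 2 * y + c 3 * (x ^ 2 - y ^ 2)

/-- The piecewise rotated-Q1 function on the reference Type II interface element:
`p⁻` where `x ≤ d + (e − d) y`, `p⁺` elsewhere. -/
def phiFn (d e : ℝ) (cm cp : Fin 4 → ℝ) (x y : ℝ) : ℝ :=
  if x ≤ d + (e - d) * y then rq1 cm x y else rq1 cp x y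

/-- Jump condition (J1): continuity at the interface points `D = (d,0)` and `E = (e,1)`. -/
def J1 (d e : ℝ) (cm cp : Fin 4 → ℝ) : Prop :=
  rq1 cm d 0 = rq1 cp d 0 ∧ rq1 cm e 1 = rq1 cp e 1

/-- Jump condition (J2): matching of the `x² − y²` coefficients. -/
def J2 (cm cp : Fin 4 → ℝ) : Prop := cm 3 = cp 3

/-- The flux defect `∫₀¹ (β⁺∇p⁺ − β⁻∇p⁻)((1−t)d + te, t) · (1, d − e) dt`. -/
def fluxDefect (βm βp d e : ℝ) (cm cp : Fin 4 → ℝ) : ℝ :=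
  ∫ t in (0:ℝ)..1,
    ((βp * (cp 1 + 2 * cp 3 * ((1 - t) * d + t * e))
        - βm * (cm 1 + 2 * cm 3 * ((1 - t) * d + t * e))) * 1
      + (βp * (cp 2 - 2 * cp 3 * t) - βm * (cm 2 - 2 * cm 3 * t)) * (d - e))

/-- Jump condition (J3): the integral over `DE` of the jump of the normal flux vanishes. -/
def J3 (βm βp d e : ℝ) (cm cp : Fin 4 → ℝ) : Prop :=
  fluxDefect βm βp d e cm cp = 0

/-- The four edge-mean (integral-value) degrees of freedom of `φ`:
bottom, right, top, left edges of `T = [0,1]²`. -/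
def dofI (d e : ℝ) (cm cp : Fin 4 → ℝ) : Fin 4 → ℝ :=
  ![(∫ x in (0:ℝ)..d, rq1 cm x 0) + ∫ x in d..(1:ℝ), rq1 cp x 0,
    ∫ y in (0:ℝ)..1, rq1 cp 1 y,
    (∫ x in (0:ℝ)..e, rq1 cm x 1) + ∫ x in e..(1:ℝ), rq1 cp x 1,
    ∫ y in (0:ℝ)..1, rq1 cm 0 y]

/-- The four midpoint-value degrees of freedom of `φ`:
values at the midpoints of the bottom, right, top, left edges of `T = [0,1]²`. -/
def dofP (d e : ℝ) (cm cp : Fin 4 → ℝ) : Fin 4 → ℝ :=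
  ![phiFn d e cm cp (1/2) 0, phiFn d e cm cp 1 (1/2),
    phiFn d e cm cp (1/2) 1, phiFn d e cm cp 0 (1/2)]

/-- The partial derivative `∂ₓᵃ∂ᵧᵇ` of the rotated-Q1 polynomial with coefficients `c`. -/
def rq1D (c : Fin 4 → ℝ) : ℕ → ℕ → ℝ → ℝ → ℝ
  | 0, 0, x, y => rq1 c x y
  | 1, 0, x, _ => c 1 + 2 * c 3 * x
  | 0, 1, _, y => c 2 - 2 * c 3 * y
  | 2, 0, _, _ => 2 * c 3
  | 1, 1, _, _ => 0
  | 0, 2, _, _ => -(2 * c 3)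
  | _, _, _, _ => 0

/-- Integral of `f` over the subelement `T⁻ = {(x,y) ∈ T : x < d + (e−d)y}`. -/
def intTm (d e : ℝ) (f : ℝ → ℝ → ℝ) : ℝ :=
  ∫ y in (0:ℝ)..1, ∫ x in (0:ℝ)..(d + (e - d) * y), f x y

/-- Integral of `f` over the subelement `T⁺ = {(x,y) ∈ T : x > d + (e−d)y}`. -/
def intTp (d e : ℝ) (f : ℝ → ℝ → ℝ) : ℝ :=
  ∫ y in (0:ℝ)..1, ∫ x in (d + (e - d) * y)..(1:ℝ), f x y

/-- `|∇p|²` for the rotated-Q1 polynomial with coefficients `c`. -/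
def gradSq (c : Fin 4 → ℝ) (x y : ℝ) : ℝ :=
  (c 1 + 2 * c 3 * x) ^ 2 + (c 2 - 2 * c 3 * y) ^ 2

/-- The weighted energy `β⁻∫_{T⁻}|∇p⁻|² + β⁺∫_{T⁺}|∇p⁺|²`. -/
def energy (βm βp d e : ℝ) (cm cp : Fin 4 → ℝ) : ℝ :=
  βm * intTm d e (gradSq cm) + βp * intTp d e (gradSq cp)


/-- antiderivative of `(p+qx)^2`. -/
def AF (p q x : ℝ) : ℝ := p^2*x + p*q*x^2 + q^2*x^3/3

lemma int_affine_sq (p q a b : ℝ) :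
    ∫ x in a..b, (p + q*x)^2 = AF p q b - AF p q a := by
  apply intervalIntegral.integral_eq_sub_of_hasDerivAt (f := fun x => AF p q x)
  · intro x _
    have h1 : HasDerivAt (fun t:ℝ => t) 1 x := hasDerivAt_id x
    have h2 : HasDerivAt (fun t:ℝ => t^2) (2*x) x := by simpa using hasDerivAt_pow 2 x
    have h3 : HasDerivAt (fun t:ℝ => t^3) (3*x^2) x := by simpa using hasDerivAt_pow 3 x
    have h4 : HasDerivAt (fun t:ℝ => p^2*t + p*q*t^2 + q^2*t^3/3)
        (p^2*1 + p*q*(2*x) + q^2/3*(3*x^2)) x := by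
      have := ((h1.const_mul (p^2)).add (h2.const_mul (p*q))).add (h3.const_mul (q^2/3))
      exact this.congr_of_eventuallyEq (Filter.Eventually.of_forall fun t => by simp only [Pi.add_apply]; ring)
    simpa only [AF] using h4.congr_deriv (by ring)
  · exact (by fun_prop : Continuous fun x:ℝ => (p + q*x)^2).intervalIntegrable _ _

lemma int_affine (u v a b : ℝ) :
    ∫ t in a..b, (u + v*t) = (u*b + v*b^2/2) - (u*a + v*a^2/2) := by
  apply intervalIntegral.integral_eq_sub_of_hasDerivAt
    (f := fun t => u*t + v*t^2/2)
  · intro x _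
    have h1 : HasDerivAt (fun t:ℝ => t) 1 x := hasDerivAt_id x
    have h2 : HasDerivAt (fun t:ℝ => t^2) (2*x) x := by simpa using hasDerivAt_pow 2 x
    have h4 : HasDerivAt (fun t:ℝ => u*t + v*t^2/2) (u*1 + v/2*(2*x)) x := by
      have := (h1.const_mul u).add (h2.const_mul (v/2))
      exact this.congr_of_eventuallyEq (Filter.Eventually.of_forall fun t => by simp only [Pi.add_apply]; ring)
    exact h4.congr_deriv (by ring)
  · exact (by fun_prop : Continuous fun t:ℝ => u + v*t).intervalIntegrable _ _

lemma inner_closed (c : Fin 4 → ℝ) (u v y : ℝ) :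
    ∫ x in u..v, gradSq c x y
      = (AF (c 1) (2*c 3) v - AF (c 1) (2*c 3) u) + (v - u) * (c 2 - 2*c 3*y)^2 := by
  have h1 : IntervalIntegrable (fun x => (c 1 + 2*c 3*x)^2) volume u v :=
    (by fun_prop : Continuous fun x:ℝ => (c 1 + 2*c 3*x)^2).intervalIntegrable _ _
  have h2 : IntervalIntegrable (fun _ : ℝ => (c 2 - 2*c 3*y)^2) volume u v :=
    intervalIntegrable_const
  calc ∫ x in u..v, gradSq c x y
      = ∫ x in u..v, ((c 1 + 2*c 3*x)^2 + (c 2 - 2*c 3*y)^2) := by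
        simp only [gradSq]
    _ = (∫ x in u..v, (c 1 + 2*c 3*x)^2) + ∫ _ in u..v, (c 2 - 2*c 3*y)^2 :=
        intervalIntegral.integral_add h1 h2
    _ = _ := by rw [int_affine_sq, intervalIntegral.integral_const, smul_eq_mul]

lemma gradSq_nonneg (c : Fin 4 → ℝ) (x y : ℝ) : 0 ≤ gradSq c x y := by
  simp only [gradSq]; positivity

lemma gradSq_cont (c : Fin 4 → ℝ) (y : ℝ) : Continuous fun x => gradSq c x y := by
  simp only [gradSq]; fun_prop

lemma rect_closed (c : Fin 4 → ℝ) (x0 x1 y0 y1 : ℝ) :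
    ∫ y in y0..y1, ∫ x in x0..x1, gradSq c x y
      = (y1 - y0) * (AF (c 1) (2*c 3) x1 - AF (c 1) (2*c 3) x0)
        + (x1 - x0) * (AF (c 2) (-(2*c 3)) y1 - AF (c 2) (-(2*c 3)) y0) := by
  have h1 : IntervalIntegrable
      (fun _ : ℝ => AF (c 1) (2*c 3) x1 - AF (c 1) (2*c 3) x0) volume y0 y1 :=
    intervalIntegrable_const
  have h2 : IntervalIntegrable (fun y : ℝ => (x1 - x0) * (c 2 - 2*c 3*y)^2) volume y0 y1 :=
    ((by fun_prop : Continuous fun y:ℝ => (x1 - x0) * (c 2 - 2*c 3*y)^2)).intervalIntegrable _ _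
  calc ∫ y in y0..y1, ∫ x in x0..x1, gradSq c x y
      = ∫ y in y0..y1, ((AF (c 1) (2*c 3) x1 - AF (c 1) (2*c 3) x0)
          + (x1 - x0) * (c 2 - 2*c 3*y)^2) := by
        simp only [inner_closed]
    _ = (∫ _ in y0..y1, (AF (c 1) (2*c 3) x1 - AF (c 1) (2*c 3) x0))
        + ∫ y in y0..y1, (x1 - x0) * (c 2 - 2*c 3*y)^2 :=
        intervalIntegral.integral_add h1 h2
    _ = _ := by
        rw [intervalIntegral.integral_const, intervalIntegral.integral_const_mul, smul_eq_mul]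
        have : ∀ y:ℝ, (c 2 - 2*c 3*y)^2 = (c 2 + (-(2*c 3))*y)^2 := fun y => by ring
        simp only [this, int_affine_sq]

lemma rectPD1 (c : Fin 4 → ℝ) :
    (1/1000)*(c 1^2 + c 2^2 + c 3^2)
      ≤ ∫ y in (0:ℝ)..1, ∫ x in (1/2:ℝ)..1, gradSq c x y := by
  rw [rect_closed]; simp only [AF]
  nlinarith [sq_nonneg (c 1 + (750/499)*c 3), sq_nonneg (c 2 - (500/499)*c 3), sq_nonneg (c 3)]

lemma rectPD2 (c : Fin 4 → ℝ) :
    (1/1000)*(c 1^2 + c 2^2 + c 3^2)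
      ≤ ∫ y in (0:ℝ)..1, ∫ x in (0:ℝ)..(1/2:ℝ), gradSq c x y := by
  rw [rect_closed]; simp only [AF]
  nlinarith [sq_nonneg (c 1 + (250/499)*c 3), sq_nonneg (c 2 - (500/499)*c 3), sq_nonneg (c 3)]

lemma rectPD3 (c : Fin 4 → ℝ) :
    (1/1000)*(c 1^2 + c 2^2 + c 3^2)
      ≤ ∫ y in (0:ℝ)..(1/2:ℝ), ∫ x in (3/4:ℝ)..1, gradSq c x y := by
  rw [rect_closed]; simp only [AF]
  nlinarith [sq_nonneg (c 1 + (875/496)*c 3), sq_nonneg (c 2 - (125/248)*c 3), sq_nonneg (c 3)]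

lemma rectPD4 (c : Fin 4 → ℝ) :
    (1/1000)*(c 1^2 + c 2^2 + c 3^2)
      ≤ ∫ y in (1/2:ℝ)..1, ∫ x in (3/4:ℝ)..1, gradSq c x y := by
  rw [rect_closed]; simp only [AF]
  nlinarith [sq_nonneg (c 1 + (875/496)*c 3), sq_nonneg (c 2 - (375/248)*c 3), sq_nonneg (c 3)]



lemma integ_inner_p (c : Fin 4 → ℝ) (d e y0 y1 : ℝ) :
    IntervalIntegrable (fun y => ∫ x in (d + (e - d) * y)..(1:ℝ), gradSq c x y)
      volume y0 y1 := by
  simp only [inner_closed, AF]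
  apply Continuous.intervalIntegrable
  fun_prop

lemma integ_inner_m (c : Fin 4 → ℝ) (d e y0 y1 : ℝ) :
    IntervalIntegrable (fun y => ∫ x in (0:ℝ)..(d + (e - d) * y), gradSq c x y)
      volume y0 y1 := by
  simp only [inner_closed, AF]
  apply Continuous.intervalIntegrable
  fun_prop

lemma integ_inner_rect (c : Fin 4 → ℝ) (x0 x1 y0 y1 : ℝ) :
    IntervalIntegrable (fun y => ∫ x in x0..x1, gradSq c x y) volume y0 y1 := by
  simp only [inner_closed, AF]
  apply Continuous.intervalIntegrable
  fun_prop

lemma inner_p_nonneg (c : Fin 4 → ℝ) (d e y : ℝ) (h : d + (e - d) * y ≤ 1) :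
    0 ≤ ∫ x in (d + (e - d) * y)..(1:ℝ), gradSq c x y :=
  intervalIntegral.integral_nonneg h (fun x _ => gradSq_nonneg c x y)

lemma inner_m_nonneg (c : Fin 4 → ℝ) (d e y : ℝ) (h : 0 ≤ d + (e - d) * y) :
    0 ≤ ∫ x in (0:ℝ)..(d + (e - d) * y), gradSq c x y :=
  intervalIntegral.integral_nonneg h (fun x _ => gradSq_nonneg c x y)

lemma intTp_nonneg (c : Fin 4 → ℝ) (d e : ℝ) (hd : d ≤ 1) (he : e ≤ 1) :
    0 ≤ intTp d e (gradSq c) := by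
  apply intervalIntegral.integral_nonneg (by norm_num)
  intro y hy
  exact inner_p_nonneg c d e y (by nlinarith [hy.1, hy.2])

lemma intTm_nonneg (c : Fin 4 → ℝ) (d e : ℝ) (hd : 0 ≤ d) (he : 0 ≤ e) :
    0 ≤ intTm d e (gradSq c) := by
  apply intervalIntegral.integral_nonneg (by norm_num)
  intro y hy
  exact inner_m_nonneg c d e y (by nlinarith [hy.1, hy.2])

lemma mono_p (d e x0 x1 y0 y1 : ℝ) (c : Fin 4 → ℝ)
    (hy0 : 0 ≤ y0) (hy01 : y0 ≤ y1) (hy1 : y1 ≤ 1) (hx01 : x0 ≤ x1) (hx1 : x1 ≤ 1)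
    (hd : d ≤ 1) (he : e ≤ 1)
    (hline : ∀ y, y0 ≤ y → y ≤ y1 → d + (e - d) * y ≤ x0) :
    ∫ y in y0..y1, ∫ x in x0..x1, gradSq c x y ≤ intTp d e (gradSq c) := by
  have hL1 : ∀ y, 0 ≤ y → y ≤ 1 → d + (e - d) * y ≤ 1 := fun y h1 h2 => by nlinarith
  calc ∫ y in y0..y1, ∫ x in x0..x1, gradSq c x y
      ≤ ∫ y in y0..y1, ∫ x in (d + (e - d) * y)..(1:ℝ), gradSq c x y := by
        apply intervalIntegral.integral_mono_on hy01 (integ_inner_rect c x0 x1 y0 y1)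
          (integ_inner_p c d e y0 y1)
        intro y hy
        apply intervalIntegral.integral_mono_interval (hline y hy.1 hy.2) hx01 hx1
        · exact Filter.Eventually.of_forall (fun x => gradSq_nonneg c x y)
        · exact ((gradSq_cont c y)).intervalIntegrable _ _
    _ ≤ intTp d e (gradSq c) := by
        apply intervalIntegral.integral_mono_interval hy0 hy01 hy1
        · have : ∀ y ∈ Ioc (0:ℝ) 1,
              0 ≤ ∫ x in (d + (e - d) * y)..(1:ℝ), gradSq c x y := fun y hy =>
            inner_p_nonneg c d e y (hL1 y hy.1.le hy.2)
          exact (ae_restrict_iff' measurableSet_Ioc).mpr (Filter.Eventually.of_forall this)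
        · exact integ_inner_p c d e 0 1

lemma mono_m (d e x0 x1 y0 y1 : ℝ) (c : Fin 4 → ℝ)
    (hy0 : 0 ≤ y0) (hy01 : y0 ≤ y1) (hy1 : y1 ≤ 1) (hx0 : 0 ≤ x0) (hx01 : x0 ≤ x1)
    (hd : 0 ≤ d) (he : 0 ≤ e)
    (hline : ∀ y, y0 ≤ y → y ≤ y1 → x1 ≤ d + (e - d) * y) :
    ∫ y in y0..y1, ∫ x in x0..x1, gradSq c x y ≤ intTm d e (gradSq c) := by
  have hL0 : ∀ y, 0 ≤ y → y ≤ 1 → 0 ≤ d + (e - d) * y := fun y h1 h2 => by nlinarith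
  calc ∫ y in y0..y1, ∫ x in x0..x1, gradSq c x y
      ≤ ∫ y in y0..y1, ∫ x in (0:ℝ)..(d + (e - d) * y), gradSq c x y := by
        apply intervalIntegral.integral_mono_on hy01 (integ_inner_rect c x0 x1 y0 y1)
          (integ_inner_m c d e y0 y1)
        intro y hy
        apply intervalIntegral.integral_mono_interval hx0 hx01 (hline y hy.1 hy.2)
        · exact Filter.Eventually.of_forall (fun x => gradSq_nonneg c x y)
        · exact ((gradSq_cont c y)).intervalIntegrable _ _
    _ ≤ intTm d e (gradSq c) := by
        have hL0' : ∀ y, 0 ≤ y → y ≤ 1 → 0 ≤ d + (e - d) * y := fun y h1 h2 => by nlinarith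
        apply intervalIntegral.integral_mono_interval hy0 hy01 hy1
        · have : ∀ y ∈ Ioc (0:ℝ) 1,
              0 ≤ ∫ x in (0:ℝ)..(d + (e - d) * y), gradSq c x y := fun y hy =>
            inner_m_nonneg c d e y (hL0' y hy.1.le hy.2)
          exact (ae_restrict_iff' measurableSet_Ioc).mpr (Filter.Eventually.of_forall this)
        · exact integ_inner_m c d e 0 1

lemma sum3_sq (X Y Z : ℝ) : (X+Y+Z)^2 ≤ 3*(X^2+Y^2+Z^2) := by
  nlinarith [sq_nonneg (X-Y), sq_nonneg (Y-Z), sq_nonneg (X-Z)]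

set_option maxHeartbeats 1000000 in
lemma transfer (β1 β2 δ ε a b k A B : ℝ) (h1 : 0 < β1) (h2 : 0 < β2)
    (hδ : δ^2 ≤ 1) (hε : ε^2 ≤ 1)
    (hR1 : a*δ + b = A*δ + B)
    (hR2 : β1*(1+δ^2)*a = (β2+β1*δ^2)*A + δ*(β1-β2)*B + 2*ε*k*(β2-β1)) :
    β1^2*(a^2+b^2) ≤ 54*(β1+β2)^2*(A^2+B^2+k^2) := by
  have h1m : (0:ℝ) ≤ 1 - δ^2 := by linarith
  have e2 : (β2+β1*δ^2)^2 ≤ (β1+β2)^2 := by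
    nlinarith [mul_nonneg (mul_nonneg h1.le h1m)
      (by positivity : (0:ℝ) ≤ β1 + 2*β2 + β1*δ^2)]
  have h3 : (β1*(1+δ^2)*a)^2
      ≤ 3*((β2+β1*δ^2)^2*A^2 + δ^2*(β1-β2)^2*B^2 + 4*ε^2*k^2*(β2-β1)^2) := by
    calc (β1*(1+δ^2)*a)^2
        = ((β2+β1*δ^2)*A + δ*(β1-β2)*B + 2*ε*k*(β2-β1))^2 := by rw [hR2]
      _ ≤ 3*(((β2+β1*δ^2)*A)^2 + (δ*(β1-β2)*B)^2 + (2*ε*k*(β2-β1))^2) := sum3_sq _ _ _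
      _ = 3*((β2+β1*δ^2)^2*A^2 + δ^2*(β1-β2)^2*B^2 + 4*ε^2*k^2*(β2-β1)^2) := by ring
  have h4 : β1^2*a^2 ≤ (β1*(1+δ^2)*a)^2 := by
    nlinarith [mul_nonneg (sq_nonneg (β1*a)) (sq_nonneg δ),
      mul_nonneg (sq_nonneg (β1*a)) (sq_nonneg (δ^2))]
  have h5 : δ^2*(β1-β2)^2 ≤ (β1+β2)^2 := by
    nlinarith [mul_nonneg h1m (sq_nonneg (β1-β2)), mul_pos h1 h2]
  have h6 : 4*ε^2*(β2-β1)^2 ≤ 4*(β1+β2)^2 := by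
    nlinarith [mul_nonneg (by linarith : (0:ℝ) ≤ 1 - ε^2) (sq_nonneg (β2-β1)),
      mul_pos h1 h2]
  have ea : β1^2*a^2 ≤ 12*((β1+β2)^2*(A^2+B^2+k^2)) := by
    nlinarith [h3, h4, mul_le_mul_of_nonneg_right e2 (sq_nonneg A),
      mul_le_mul_of_nonneg_right h5 (sq_nonneg B),
      mul_le_mul_of_nonneg_right h6 (sq_nonneg k)]
  have eb : b^2 ≤ 3*(A^2+B^2+a^2) := by
    have hb : b = A*δ + B - a*δ := by linarith [hR1]
    rw [hb]
    nlinarith [sq_nonneg (A*δ - B), sq_nonneg (A*δ + a*δ), sq_nonneg (B + a*δ),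
      mul_nonneg h1m (sq_nonneg A), mul_nonneg h1m (sq_nonneg a)]
  have ebb : β1^2*b^2 ≤ β1^2*(3*(A^2+B^2+a^2)) :=
    mul_le_mul_of_nonneg_left eb (sq_nonneg β1)
  have ec : β1^2*(A^2+B^2) ≤ (β1+β2)^2*(A^2+B^2) :=
    mul_le_mul_of_nonneg_right (by nlinarith [mul_pos h1 h2] : β1^2 ≤ (β1+β2)^2)
      (by positivity)
  nlinarith [ea, ebb, ec, mul_nonneg (sq_nonneg (β1+β2)) (sq_nonneg k),
    mul_nonneg (sq_nonneg (β1+β2)) (by positivity : (0:ℝ) ≤ A^2+B^2+k^2)]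

lemma rq1D01 (c : Fin 4 → ℝ) (x y : ℝ) : rq1D c 0 1 x y = c 2 - 2 * c 3 * y := rfl

lemma rq1D10 (c : Fin 4 → ℝ) (x y : ℝ) : rq1D c 1 0 x y = c 1 + 2 * c 3 * x := rfl

lemma fluxDefect_eq (βm βp d e : ℝ) (cm cp : Fin 4 → ℝ) :
    fluxDefect βm βp d e cm cp
      = βp*cp 1 - βm*cm 1 + 2*e*(βp*cp 3 - βm*cm 3) + (d-e)*(βp*cp 2 - βm*cm 2) := by
  unfold fluxDefect
  rw [intervalIntegral.integral_congr (g := fun t : ℝ =>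
      (βp*cp 1 - βm*cm 1 + 2*d*(βp*cp 3 - βm*cm 3) + (d-e)*(βp*cp 2 - βm*cm 2))
        + (4*(e-d)*(βp*cp 3 - βm*cm 3))*t)
    (fun t _ => by ring)]
  rw [int_affine]; ring

lemma assemble (β1 β2 EN S1 S2 : ℝ) (h1 : 0 < β1) (h2 : 0 < β2) (hEN : 0 ≤ EN)
    (hS2 : 0 ≤ S2)
    (hfat : β2*S2 ≤ 1000*EN)
    (hthin : β1^2*S1 ≤ 54*(β1+β2)^2*S2) :
    S1 + S2 ≤ (1 + 54*(β1+β2)^2*(1/β1^2+1/β2^2)) * (1000*((1/β1+1/β2)*EN)) := by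
  have hA : S2 ≤ 1000*EN/β2 := (le_div_iff₀ h2).mpr (by linarith [hfat])
  have hB : S1 ≤ 54*(β1+β2)^2*S2/β1^2 :=
    (le_div_iff₀ (by positivity : (0:ℝ) < β1^2)).mpr (by nlinarith [hthin])
  have step1 : S1 + S2 ≤ (1 + 54*(β1+β2)^2*(1/β1^2+1/β2^2))*S2 := by
    have hpos : (0:ℝ) ≤ 54*(β1+β2)^2*(1/β2^2)*S2 := by positivity
    have heq : 54*(β1+β2)^2*S2/β1^2 = 54*(β1+β2)^2*(1/β1^2)*S2 := by ring
    nlinarith [hB, hpos]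
  have step2 : (1 + 54*(β1+β2)^2*(1/β1^2+1/β2^2))*S2
      ≤ (1 + 54*(β1+β2)^2*(1/β1^2+1/β2^2))*(1000*((1/β1+1/β2)*EN)) := by
    apply mul_le_mul_of_nonneg_left _ (by positivity)
    calc S2 ≤ 1000*EN/β2 := hA
      _ = 1000*((1/β2)*EN) := by ring
      _ ≤ 1000*((1/β1+1/β2)*EN) := by
          have h3 : (1/β2:ℝ) ≤ 1/β1+1/β2 := by
            have : (0:ℝ) < 1/β1 := by positivity
            linarith
          have h4 := mul_le_mul_of_nonneg_right h3 hEN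
          linarith
  linarith [step1, step2]


set_option maxHeartbeats 2000000 in
lemma hT_all (βm βp : ℝ) (hβm : 0 < βm) (hβp : 0 < βp)
    (d e : ℝ) (hd0 : 0 < d) (hd1 : d < 1) (he0 : 0 < e) (he1 : e < 1)
    (cm cp : Fin 4 → ℝ) (hJ2' : cm 3 = cp 3)
    (ht1 : βm^2*((cm 1)^2+(cm 2)^2) ≤ 54*(βm+βp)^2*((cp 1)^2+(cp 2)^2+(cp 3)^2))
    (ht2 : βp^2*((cp 1)^2+(cp 2)^2) ≤ 54*(βp+βm)^2*((cm 1)^2+(cm 2)^2+(cp 3)^2)) :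
    (cm 1)^2+(cm 2)^2+((cp 1)^2+(cp 2)^2+(cp 3)^2)
      ≤ (1 + 54*(βm+βp)^2*(1/βm^2+1/βp^2))
          * (1000*((1/βm+1/βp)*(energy βm βp d e cm cp))) := by
  have hIm := intTm_nonneg cm d e hd0.le he0.le
  have hIp := intTp_nonneg cp d e hd1.le he1.le
  set EN := energy βm βp d e cm cp with hENdef
  have hENeq : EN = βm * intTm d e (gradSq cm) + βp * intTp d e (gradSq cp) := rfl
  have hEN0 : 0 ≤ EN := by
    rw [hENeq]
    exact add_nonneg (mul_nonneg hβm.le hIm) (mul_nonneg hβp.le hIp)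
  rcases le_or_gt d (1/2) with hd2 | hd2
  · rcases le_or_gt e (1/2) with he2' | he2'
    · have hmono := mono_p d e (1/2) 1 0 1 cp (by norm_num) (by norm_num) (by norm_num)
        (by norm_num) (by norm_num) hd1.le he1.le
        (fun y hy1 hy2 => by
          nlinarith [mul_nonneg (by linarith : (0:ℝ) ≤ 1-y) (by linarith : (0:ℝ) ≤ 1/2-d),
            mul_nonneg (by linarith : (0:ℝ) ≤ y) (by linarith : (0:ℝ) ≤ 1/2-e)])
      have hfat : βp*((cp 1)^2+(cp 2)^2+(cp 3)^2) ≤ 1000*EN := by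
        have h1 := mul_le_mul_of_nonneg_left ((rectPD1 cp).trans hmono) hβp.le
        have h3 : 0 ≤ βm * intTm d e (gradSq cm) := mul_nonneg hβm.le hIm
        rw [hENeq]; nlinarith [h1, h3]
      exact assemble βm βp EN _ _ hβm hβp hEN0 (by positivity) hfat ht1
    · have hmono := mono_p d e (3/4) 1 0 (1/2) cp (by norm_num) (by norm_num) (by norm_num)
        (by norm_num) (by norm_num) hd1.le he1.le
        (fun y hy1 hy2 => by
          nlinarith [mul_nonneg (by linarith : (0:ℝ) ≤ 1-y) (by linarith : (0:ℝ) ≤ 1/2-d),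
            mul_nonneg (by linarith : (0:ℝ) ≤ y) (by linarith : (0:ℝ) ≤ 1-e)])
      have hfat : βp*((cp 1)^2+(cp 2)^2+(cp 3)^2) ≤ 1000*EN := by
        have h1 := mul_le_mul_of_nonneg_left ((rectPD3 cp).trans hmono) hβp.le
        have h3 : 0 ≤ βm * intTm d e (gradSq cm) := mul_nonneg hβm.le hIm
        rw [hENeq]; nlinarith [h1, h3]
      exact assemble βm βp EN _ _ hβm hβp hEN0 (by positivity) hfat ht1
  · rcases le_or_gt e (1/2) with he2' | he2'
    · have hmono := mono_p d e (3/4) 1 (1/2) 1 cp (by norm_num) (by norm_num) (by norm_num)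
        (by norm_num) (by norm_num) hd1.le he1.le
        (fun y hy1 hy2 => by
          nlinarith [mul_nonneg (by linarith : (0:ℝ) ≤ 1-y) (by linarith : (0:ℝ) ≤ 1-d),
            mul_nonneg (by linarith : (0:ℝ) ≤ y) (by linarith : (0:ℝ) ≤ 1/2-e)])
      have hfat : βp*((cp 1)^2+(cp 2)^2+(cp 3)^2) ≤ 1000*EN := by
        have h1 := mul_le_mul_of_nonneg_left ((rectPD4 cp).trans hmono) hβp.le
        have h3 : 0 ≤ βm * intTm d e (gradSq cm) := mul_nonneg hβm.le hIm
        rw [hENeq]; nlinarith [h1, h3]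
      exact assemble βm βp EN _ _ hβm hβp hEN0 (by positivity) hfat ht1
    · have hmono := mono_m d e 0 (1/2) 0 1 cm (by norm_num) (by norm_num) (by norm_num)
        (by norm_num) (by norm_num) hd0.le he0.le
        (fun y hy1 hy2 => by
          nlinarith [mul_nonneg (by linarith : (0:ℝ) ≤ 1-y) (by linarith : (0:ℝ) ≤ d-1/2),
            mul_nonneg (by linarith : (0:ℝ) ≤ y) (by linarith : (0:ℝ) ≤ e-1/2)])
      have hfat : βm*((cm 1)^2+(cm 2)^2+(cp 3)^2) ≤ 1000*EN := by
        have h1' := (rectPD2 cm).trans hmono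
        rw [hJ2'] at h1'
        have h1 := mul_le_mul_of_nonneg_left h1' hβm.le
        have h3 : 0 ≤ βp * intTp d e (gradSq cp) := mul_nonneg hβp.le hIp
        rw [hENeq]; nlinarith [h1, h3]
      have hass := assemble βp βm EN ((cp 1)^2+(cp 2)^2) ((cm 1)^2+(cm 2)^2+(cp 3)^2)
        hβp hβm hEN0 (by positivity) hfat ht2
      calc (cm 1)^2+(cm 2)^2+((cp 1)^2+(cp 2)^2+(cp 3)^2)
          = (cp 1)^2+(cp 2)^2 + ((cm 1)^2+(cm 2)^2+(cp 3)^2) := by ring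
        _ ≤ (1 + 54*(βp+βm)^2*(1/βp^2+1/βm^2)) * (1000*((1/βp+1/βm)*EN)) := hass
        _ = (1 + 54*(βm+βp)^2*(1/βm^2+1/βp^2)) * (1000*((1/βm+1/βp)*EN)) := by ring

lemma edge_bot (βm βp d a b A B k km : ℝ) (hd0 : 0 < d) (hd1 : d < 1) :
    (d-0)*(βm*(b - 2*km*0))^2 + (1-d)*(βp*(B - 2*k*0))^2
      ≤ 10*(βm^2+βp^2)*(a^2+b^2+(A^2+B^2+k^2)) := by
  nlinarith [mul_nonneg (by linarith : (0:ℝ) ≤ 1-d) (sq_nonneg (βm*b)),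
    mul_nonneg hd0.le (sq_nonneg (βp*B)),
    mul_nonneg (sq_nonneg βm) (sq_nonneg a), mul_nonneg (sq_nonneg βm) (sq_nonneg A),
    mul_nonneg (sq_nonneg βm) (sq_nonneg B), mul_nonneg (sq_nonneg βm) (sq_nonneg k),
    mul_nonneg (sq_nonneg βp) (sq_nonneg a), mul_nonneg (sq_nonneg βp) (sq_nonneg b),
    mul_nonneg (sq_nonneg βp) (sq_nonneg A), mul_nonneg (sq_nonneg βp) (sq_nonneg k),
    mul_nonneg (sq_nonneg βm) (sq_nonneg b), mul_nonneg (sq_nonneg βp) (sq_nonneg B)]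

lemma edge_right (βm βp a b A B k : ℝ) :
    ((1:ℝ)-0)*(βp*(A + 2*k*1))^2 ≤ 10*(βm^2+βp^2)*(a^2+b^2+(A^2+B^2+k^2)) := by
  nlinarith [mul_nonneg (sq_nonneg βp) (sq_nonneg (A - 2*k)),
    mul_nonneg (sq_nonneg βm) (sq_nonneg a), mul_nonneg (sq_nonneg βm) (sq_nonneg b),
    mul_nonneg (sq_nonneg βm) (sq_nonneg A), mul_nonneg (sq_nonneg βm) (sq_nonneg B),
    mul_nonneg (sq_nonneg βm) (sq_nonneg k),
    mul_nonneg (sq_nonneg βp) (sq_nonneg a), mul_nonneg (sq_nonneg βp) (sq_nonneg b),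
    mul_nonneg (sq_nonneg βp) (sq_nonneg A), mul_nonneg (sq_nonneg βp) (sq_nonneg B),
    mul_nonneg (sq_nonneg βp) (sq_nonneg k)]

lemma edge_top (βm βp e a b A B k : ℝ) (he0 : 0 < e) (he1 : e < 1) :
    (e-0)*(βm*(b - 2*k*1))^2 + (1-e)*(βp*(B - 2*k*1))^2
      ≤ 10*(βm^2+βp^2)*(a^2+b^2+(A^2+B^2+k^2)) := by
  nlinarith [mul_nonneg (by linarith : (0:ℝ) ≤ 1-e) (sq_nonneg (βm*(b - 2*k))),
    mul_nonneg he0.le (sq_nonneg (βp*(B - 2*k))),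
    mul_nonneg (sq_nonneg βm) (sq_nonneg (b + 2*k)),
    mul_nonneg (sq_nonneg βp) (sq_nonneg (B + 2*k)),
    mul_nonneg (sq_nonneg βm) (sq_nonneg a), mul_nonneg (sq_nonneg βm) (sq_nonneg A),
    mul_nonneg (sq_nonneg βm) (sq_nonneg B), mul_nonneg (sq_nonneg βm) (sq_nonneg k),
    mul_nonneg (sq_nonneg βp) (sq_nonneg a), mul_nonneg (sq_nonneg βp) (sq_nonneg b),
    mul_nonneg (sq_nonneg βp) (sq_nonneg A), mul_nonneg (sq_nonneg βp) (sq_nonneg k),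
    mul_nonneg (sq_nonneg βm) (sq_nonneg b), mul_nonneg (sq_nonneg βp) (sq_nonneg B)]

lemma edge_left (βm βp a b A B k km : ℝ) :
    ((1:ℝ)-0)*(βm*(a + 2*km*0))^2 ≤ 10*(βm^2+βp^2)*(a^2+b^2+(A^2+B^2+k^2)) := by
  nlinarith [mul_nonneg (sq_nonneg βm) (sq_nonneg b),
    mul_nonneg (sq_nonneg βm) (sq_nonneg A), mul_nonneg (sq_nonneg βm) (sq_nonneg B),
    mul_nonneg (sq_nonneg βm) (sq_nonneg k), mul_nonneg (sq_nonneg βm) (sq_nonneg a),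
    mul_nonneg (sq_nonneg βp) (sq_nonneg a), mul_nonneg (sq_nonneg βp) (sq_nonneg b),
    mul_nonneg (sq_nonneg βp) (sq_nonneg A), mul_nonneg (sq_nonneg βp) (sq_nonneg B),
    mul_nonneg (sq_nonneg βp) (sq_nonneg k)]

set_option maxHeartbeats 1000000 in
/-- Trace inequality for rotated-Q1 IFE functions, uniform in the
interface location (reference element, `h = 1`): on each of the four edges of `T`, the
squared `L²` norm of the normal flux `β ∂φ/∂ν` (taken piecewise on the cut bottom and top
edges) is bounded by `C` times the weighted energy. -/
theorem ife_trace_inequality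
    (βm βp : ℝ) (hβm : 0 < βm) (hβp : 0 < βp) :
    ∃ C > 0, ∀ d ∈ Ioo (0:ℝ) 1, ∀ e ∈ Ioo (0:ℝ) 1,
      ∀ cm cp : Fin 4 → ℝ,
        J1 d e cm cp → J2 cm cp → J3 βm βp d e cm cp →
        ((∫ x in (0:ℝ)..d, (βm * rq1D cm 0 1 x 0) ^ 2) +
            (∫ x in d..(1:ℝ), (βp * rq1D cp 0 1 x 0) ^ 2) ≤
          C * energy βm βp d e cm cp) ∧
        ((∫ y in (0:ℝ)..1, (βp * rq1D cp 1 0 1 y) ^ 2) ≤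
          C * energy βm βp d e cm cp) ∧
        ((∫ x in (0:ℝ)..e, (βm * rq1D cm 0 1 x 1) ^ 2) +
            (∫ x in e..(1:ℝ), (βp * rq1D cp 0 1 x 1) ^ 2) ≤
          C * energy βm βp d e cm cp) ∧
        ((∫ y in (0:ℝ)..1, (βm * rq1D cm 1 0 0 y) ^ 2) ≤
          C * energy βm βp d e cm cp) := by
  refine ⟨10*(βm^2+βp^2)*((1 + 54*(βm+βp)^2*(1/βm^2+1/βp^2)) * (1000*(1/βm+1/βp))),
    by positivity, ?_⟩
  rintro d ⟨hd0, hd1⟩ e ⟨he0, he1⟩ cm cp hJ1 hJ2 hJ3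
  obtain ⟨h11, h12⟩ := hJ1
  simp only [rq1] at h11 h12
  have hJ2' : cm 3 = cp 3 := hJ2
  have hR2' : βp*cp 1 - βm*cm 1 + 2*e*(βp*cp 3 - βm*cm 3)
      + (d-e)*(βp*cp 2 - βm*cm 2) = 0 := by
    rw [← fluxDefect_eq]; exact hJ3
  have hR1 : cm 1*(e-d) + cm 2 = cp 1*(e-d) + cp 2 := by
    linear_combination h12 - h11 - (e^2-1-d^2)*hJ2'
  have hδ2 : (e-d)^2 ≤ 1 := by nlinarith
  have he2 : e^2 ≤ 1 := by nlinarith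
  have hrel1 : βm*(1+(e-d)^2)*cm 1
      = (βp+βm*(e-d)^2)*cp 1 + (e-d)*(βm-βp)*cp 2 + 2*e*cp 3*(βp-βm) := by
    linear_combination (-1:ℝ)*hR2' + (e-d)*βm*hR1 - 2*e*βm*hJ2'
  have hrel2 : βp*(1+(e-d)^2)*cp 1
      = (βm+βp*(e-d)^2)*cm 1 + (e-d)*(βp-βm)*cm 2 + 2*e*cp 3*(βm-βp) := by
    linear_combination hR2' - (e-d)*βp*hR1 + 2*e*βm*hJ2'
  have ht1 : βm^2*((cm 1)^2+(cm 2)^2) ≤ 54*(βm+βp)^2*((cp 1)^2+(cp 2)^2+(cp 3)^2) :=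
    transfer βm βp (e-d) e (cm 1) (cm 2) (cp 3) (cp 1) (cp 2) hβm hβp hδ2 he2 hR1 hrel1
  have ht2 : βp^2*((cp 1)^2+(cp 2)^2) ≤ 54*(βp+βm)^2*((cm 1)^2+(cm 2)^2+(cp 3)^2) :=
    transfer βp βm (e-d) e (cp 1) (cp 2) (cp 3) (cm 1) (cm 2) hβp hβm hδ2 he2
      (by linarith [hR1]) hrel2
  clear h11 h12 hR1 hR2' hrel1 hrel2 hJ2 hJ3 hδ2 he2
  have hIm := intTm_nonneg cm d e hd0.le he0.le
  have hIp := intTp_nonneg cp d e hd1.le he1.le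
  set EN := energy βm βp d e cm cp with hENdef
  have hENeq : EN = βm * intTm d e (gradSq cm) + βp * intTp d e (gradSq cp) := rfl
  have hEN0 : 0 ≤ EN := by
    rw [hENeq]
    exact add_nonneg (mul_nonneg hβm.le hIm) (mul_nonneg hβp.le hIp)
  have hT : (cm 1)^2+(cm 2)^2+((cp 1)^2+(cp 2)^2+(cp 3)^2)
      ≤ (1 + 54*(βm+βp)^2*(1/βm^2+1/βp^2))
          * (1000*((1/βm+1/βp)*EN)) :=
    hT_all βm βp hβm hβp d e hd0 hd1 he0 he1 cm cp hJ2' ht1 ht2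
  have hTpos : (0:ℝ) ≤ 10*(βm^2+βp^2) := by positivity
  have hfin := mul_le_mul_of_nonneg_left hT hTpos
  refine ⟨?_, ?_, ?_, ?_⟩
  · simp only [rq1D01, intervalIntegral.integral_const, smul_eq_mul]
    exact le_trans
      (edge_bot βm βp d (cm 1) (cm 2) (cp 1) (cp 2) (cp 3) (cm 3) hd0 hd1)
      (le_trans hfin (le_of_eq (by ring)))
  · simp only [rq1D10, intervalIntegral.integral_const, smul_eq_mul]
    exact le_trans
      (edge_right βm βp (cm 1) (cm 2) (cp 1) (cp 2) (cp 3))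
      (le_trans hfin (le_of_eq (by ring)))
  · simp only [rq1D01, intervalIntegral.integral_const, smul_eq_mul]
    rw [hJ2']
    exact le_trans
      (edge_top βm βp e (cm 1) (cm 2) (cp 1) (cp 2) (cp 3) he0 he1)
      (le_trans hfin (le_of_eq (by ring)))
  · simp only [rq1D10, intervalIntegral.integral_const, smul_eq_mul]
    exact le_trans
      (edge_left βm βp (cm 1) (cm 2) (cp 1) (cp 2) (cp 3) (cm 3))
      (le_trans hfin (le_of_eq (by ring)))

end
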